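/- arXiv:2112.06834 — 5 statements merged into one kernel-verified Lean document; each statement's English description precedes it below -/
import Mathlib

section
/- Let {X_ℓ, f_ℓ} be an inverse sequence of compact metric spaces with surjective continuous bonding functions, let g : varprojlim{X_ℓ, f_ℓ} → varprojlim{X_ℓ, f_ℓ} be a continuous function, and let (n₀, m₀) ∈ W be such that f_{n₀,m₀}(x) ∉ T_{n₀,m₀}(g)(x) for each x ∈ X_{m₀}. Then for all (n, m) ∈ W with n ≥ n₀ and m ≥ m₀, it holds that f_{n,m}(x) ∉ T_{n,m}(g)(x) for each x ∈ X_m. -/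
open Metric Filter Set Function

/-- The inverse limit of an inverse sequence `{X n, f n}` of spaces with
single-valued bonding maps `f n : X (n+1) → X n`. -/
def invLim (X : ℕ → Type*) (f : ∀ n, X (n + 1) → X n) : Set (∀ n, X n) :=
  {x | ∀ n, x n = f n (x (n + 1))}

/-- The composite bonding map `f_{n,m} : X m → X n` for `n ≤ m`. -/
def bondMap {X : ℕ → Type*} (f : ∀ n, X (n + 1) → X n) {n m : ℕ} (h : n ≤ m) :
    X m → X n :=
  Nat.leRecOn (C := fun k => X k → X n) h (fun {k} g => g ∘ f k) id

/-- A set-valued function is upper semicontinuous (with nonempty closed values):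
all of its values are nonempty closed sets and its graph is closed. -/
def IsUSC {A B : Type*} [TopologicalSpace A] [TopologicalSpace B] (F : A → Set B) : Prop :=
  (∀ a, (F a).Nonempty) ∧ (∀ a, IsClosed (F a)) ∧ IsClosed {p : A × B | p.2 ∈ F p.1}

/-- The `T_{n,m}` transformation of a map between inverse limits:
`T_{n,m}(g)(x) = q_n (g (p_m ⁻¹ x))`. -/
def Ttrans {X Y : ℕ → Type*} {f : ∀ n, X (n + 1) → X n} {gs : ∀ n, Y (n + 1) → Y n}
    (g : ↥(invLim X f) → ↥(invLim Y gs)) (n m : ℕ) (x : X m) : Set (Y n) :=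
  {y | ∃ z : ↥(invLim X f), z.1 m = x ∧ (g z).1 n = y}

/-- A space has the fixed point property if every continuous self-map has a fixed point. -/
def HasFPP (Z : Type*) [TopologicalSpace Z] : Prop :=
  ∀ g : Z → Z, Continuous g → ∃ p, g p = p

lemma bondMap_self {X : ℕ → Type*} (f : ∀ n, X (n + 1) → X n) {n : ℕ} (h : n ≤ n)
    (x : X n) : bondMap f h x = x := by
  unfold bondMap; rw [Nat.leRecOn_self]; rfl

lemma bondMap_succ {X : ℕ → Type*} (f : ∀ n, X (n + 1) → X n) {n m : ℕ} (h : n ≤ m)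
    {h' : n ≤ m + 1} (x : X (m + 1)) : bondMap f h' x = bondMap f h (f m x) := by
  unfold bondMap; rw [Nat.leRecOn_succ h]; rfl

lemma bondMap_invLim {X : ℕ → Type*} (f : ∀ n, X (n + 1) → X n)
    (z : ∀ k, X k) (hz : z ∈ invLim X f) {n m : ℕ} (h : n ≤ m) :
    bondMap f h (z m) = z n := by
  induction m, h using Nat.le_induction with
  | base => exact bondMap_self f _ _
  | succ m h ih =>
    rw [bondMap_succ f h, ← hz m]
    exact ih

lemma bondMap_comp {X : ℕ → Type*} (f : ∀ n, X (n + 1) → X n)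
    {n k m : ℕ} (h₁ : n ≤ k) (h₂ : k ≤ m) (x : X m) :
    bondMap f h₁ (bondMap f h₂ x) = bondMap f (h₁.trans h₂) x := by
  induction m, h₂ using Nat.le_induction with
  | base => rw [bondMap_self f]
  | succ m h ih =>
    rw [bondMap_succ f h (h' := h.trans m.le_succ),
      bondMap_succ f (h₁.trans h) (h' := h₁.trans (h.trans m.le_succ))]
    exact ih _

theorem stmt1
    {X : ℕ → Type*} [∀ n, MetricSpace (X n)] [∀ n, CompactSpace (X n)]
    (f : ∀ n, X (n + 1) → X n)
    (hfc : ∀ n, Continuous (f n)) (hfs : ∀ n, Surjective (f n))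
    (g : ↥(invLim X f) → ↥(invLim X f)) (hg : Continuous g)
    (n₀ m₀ : ℕ) (h₀ : n₀ ≤ m₀)
    (hyp : ∀ x : X m₀, bondMap f h₀ x ∉ Ttrans g n₀ m₀ x) :
    ∀ n m : ℕ, ∀ h : n ≤ m, n₀ ≤ n → m₀ ≤ m →
      ∀ x : X m, bondMap f h x ∉ Ttrans g n m x := by
  intro n m h hn hm x hmem
  obtain ⟨z, hzm, hzn⟩ := hmem
  apply hyp (bondMap f hm x)
  refine ⟨z, ?_, ?_⟩
  · rw [← hzm, bondMap_invLim f z.1 z.2 hm]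
  · have h1 : (g z).1 n₀ = bondMap f hn ((g z).1 n) :=
      (bondMap_invLim f (g z).1 (g z).2 hn).symm
    rw [h1, hzn, bondMap_comp, bondMap_comp]
end

section
/- Let {X_ℓ, f_ℓ} and {Y_ℓ, g_ℓ} be inverse sequences of compact metric spaces with surjective continuous bonding functions, let g : varprojlim{X_ℓ, f_ℓ} → varprojlim{Y_ℓ, g_ℓ} be a continuous function, let ε > 0 and let n be a positive integer. Then there is a positive integer m₀ such that for each positive integer m ≥ m₀: (1) diam(T_{n,m}(g)(x)) < ε for every x ∈ X_m, and (2) q_n(g(x)) ∈ T_{n,m}(g)(p_m(x)) for each x ∈ varprojlim{X_ℓ, f_ℓ}. -/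
open Metric Filter Set Function Uniformity

/-- Two points of an inverse limit that agree at coordinate `m` agree at all
coordinates `i ≤ m`. -/
lemma invLim_agree {X : ℕ → Type*} {f : ∀ n, X (n + 1) → X n}
    {z w : ∀ n, X n} (hz : z ∈ invLim X f) (hw : w ∈ invLim X f)
    {i m : ℕ} (him : i ≤ m) (h : z m = w m) : z i = w i := by
  induction m, him using Nat.le_induction with
  | base => exact h
  | succ m him ih =>
    apply ih
    rw [hz m, hw m, h]

theorem stmt3
    {X Y : ℕ → Type*} [∀ n, MetricSpace (X n)] [∀ n, CompactSpace (X n)]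
    [∀ n, MetricSpace (Y n)] [∀ n, CompactSpace (Y n)]
    (f : ∀ n, X (n + 1) → X n) (gs : ∀ n, Y (n + 1) → Y n)
    (hfc : ∀ n, Continuous (f n)) (hfs : ∀ n, Surjective (f n))
    (hgc : ∀ n, Continuous (gs n)) (hgs : ∀ n, Surjective (gs n))
    (g : ↥(invLim X f) → ↥(invLim Y gs)) (hg : Continuous g)
    (ε : ℝ) (hε : 0 < ε) (n : ℕ) :
    ∃ m₀ : ℕ, ∀ m : ℕ, m₀ ≤ m →
      (∀ x : X m, diam (Ttrans g n m x) < ε) ∧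
      (∀ z : ↥(invLim X f), (g z).1 n ∈ Ttrans g n m (z.1 m)) := by
  -- the inverse limit is compact
  have hclosed : IsClosed (invLim X f) := by
    have : invLim X f = ⋂ k, {x : ∀ n, X n | x k = f k (x (k + 1))} := by
      ext x; simp [invLim, Set.mem_iInter]
    rw [this]
    exact isClosed_iInter fun k =>
      isClosed_eq (continuous_apply k) ((hfc k).comp (continuous_apply (k + 1)))
  have : CompactSpace (↥(invLim X f)) := isCompact_iff_compactSpace.mp hclosed.isCompact
  -- the coordinate map φ
  set φ : ↥(invLim X f) → Y n := fun z => (g z).1 n with hφdef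
  have hφ : Continuous φ := (continuous_apply n).comp (continuous_subtype_val.comp hg)
  have hU : UniformContinuous φ := CompactSpace.uniformContinuous_of_continuous hφ
  -- find finitely many coordinates controlling φ up to ε/2
  have hE : {p : Y n × Y n | dist p.1 p.2 < ε / 2} ∈ 𝓤 (Y n) :=
    dist_mem_uniformity (by linarith)
  have hmem := hU hE
  rw [uniformity_subtype, Filter.mem_map, Filter.mem_comap] at hmem
  obtain ⟨S, hS, hSsub⟩ := hmem
  rw [Pi.uniformity, Filter.mem_iInf] at hS
  obtain ⟨I, hIfin, V, hV, rfl⟩ := hS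
  -- key: points agreeing at all coordinates in I land in the entourage
  have hkey : ∀ z w : ↥(invLim X f), (∀ i ∈ I, z.1 i = w.1 i) → dist (φ z) (φ w) < ε / 2 := by
    intro z w hzw
    have : ((z, w) : ↥(invLim X f) × ↥(invLim X f)) ∈
        (fun q : ↥(invLim X f) × ↥(invLim X f) => ((q.1 : ∀ i, X i), (q.2 : ∀ i, X i))) ⁻¹'
          ⋂ i, V i := by
      refine Set.mem_iInter.2 fun i => ?_
      obtain ⟨W, hW, hWsub⟩ := Filter.mem_comap.1 (hV i)
      apply hWsub
      show (z.1 i.1, w.1 i.1) ∈ W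
      rw [hzw i.1 i.2]
      exact refl_mem_uniformity hW
    exact hSsub this
  -- a bound on I
  obtain ⟨m₀, hm₀⟩ := hIfin.bddAbove
  refine ⟨m₀, fun m hm => ⟨?_, ?_⟩⟩
  · intro x
    have hle : diam (Ttrans g n m x) ≤ ε / 2 := by
      apply diam_le_of_forall_dist_le (by linarith)
      rintro y ⟨z, hz, rfl⟩ y' ⟨w, hw, rfl⟩
      have : dist (φ z) (φ w) < ε / 2 := by
        apply hkey
        intro i hi
        exact invLim_agree z.2 w.2 (le_trans (hm₀ hi) hm) (hz.trans hw.symm)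
      exact le_of_lt this
    linarith
  · intro z
    exact ⟨z, rfl, rfl⟩
end

section
/- Let {X_ℓ, f_ℓ} and {Y_ℓ, g_ℓ} be inverse sequences of compact metric spaces with surjective continuous bonding functions, let g : varprojlim{X_ℓ, f_ℓ} → varprojlim{Y_ℓ, g_ℓ} be a continuous function, let ε > 0 and let n be a positive integer. Then there is a positive integer m₀ such that for each positive integer m ≥ m₀ and each j ∈ {1, 2, …, n}: (1) diam(g_{j,n}(T_{n,m}(g)(x))) < ε for every x ∈ X_m, and (2) q_j(g(x)) ∈ g_{j,n}(T_{n,m}(g)(p_m(x))) for each x ∈ varprojlim{X_ℓ, f_ℓ}. -/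
open Metric Filter Set Function

lemma bondMap_eval {Y : ℕ → Type*} (gs : ∀ n, Y (n + 1) → Y n)
    {x : ∀ n, Y n} (hx : x ∈ invLim Y gs) {j m : ℕ} (h : j ≤ m) :
    bondMap gs h (x m) = x j := by
  induction m, h using Nat.le_induction with
  | base =>
    unfold bondMap
    rw [Nat.leRecOn_self]
    rfl
  | succ m hm ih =>
    unfold bondMap
    rw [Nat.leRecOn_succ hm]
    show (Nat.leRecOn (C := fun k => Y k → Y j) hm (fun {k} g => g ∘ gs k) id)
      (gs m (x (m + 1))) = x j
    rw [← hx m]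
    exact ih

theorem stmt4
    {X Y : ℕ → Type*} [∀ n, MetricSpace (X n)] [∀ n, CompactSpace (X n)]
    [∀ n, MetricSpace (Y n)] [∀ n, CompactSpace (Y n)]
    (f : ∀ n, X (n + 1) → X n) (gs : ∀ n, Y (n + 1) → Y n)
    (hfc : ∀ n, Continuous (f n)) (hfs : ∀ n, Surjective (f n))
    (hgc : ∀ n, Continuous (gs n)) (hgs : ∀ n, Surjective (gs n))
    (g : ↥(invLim X f) → ↥(invLim Y gs)) (hg : Continuous g)
    (ε : ℝ) (hε : 0 < ε) (n : ℕ) :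
    ∃ m₀ : ℕ, ∀ m : ℕ, m₀ ≤ m → ∀ j : ℕ, ∀ hj : j ≤ n,
      (∀ x : X m, diam (bondMap gs hj '' Ttrans g n m x) < ε) ∧
      (∀ z : ↥(invLim X f), (g z).1 j ∈ bondMap gs hj '' Ttrans g n m (z.1 m)) := by

  classical
  have hZclosed : IsClosed (invLim X f) := by
    have he : invLim X f = ⋂ k, {x : ∀ n, X n | x k = f k (x (k + 1))} := by
      ext x; simp [invLim]
    rw [he]
    exact isClosed_iInter fun k =>
      isClosed_eq (continuous_apply k) ((hfc k).comp (continuous_apply (k + 1)))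
  haveI : CompactSpace ↥(invLim X f) := isCompact_iff_compactSpace.mp hZclosed.isCompact
  have hgj : ∀ j, Continuous fun z : ↥(invLim X f) => (g z).1 j := fun j =>
    (continuous_apply j).comp (continuous_subtype_val.comp hg)
  set U : Set (↥(invLim X f) × ↥(invLim X f)) :=
    {p | ∀ j ≤ n, dist ((g p.1).1 j) ((g p.2).1 j) < ε / 2} with hUdef
  have hUopen : IsOpen U := by
    have he : U = ⋂ j ∈ Finset.range (n + 1),
        {p : ↥(invLim X f) × ↥(invLim X f) | dist ((g p.1).1 j) ((g p.2).1 j) < ε / 2} := by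
      ext p; simp [hUdef, Nat.lt_succ_iff]
    rw [he]
    exact isOpen_biInter_finset fun j _ =>
      isOpen_lt (Continuous.dist ((hgj j).comp continuous_fst)
        ((hgj j).comp continuous_snd)) continuous_const
  set D : ℕ → Set (↥(invLim X f) × ↥(invLim X f)) :=
    fun m => {p | p.1.1 m = p.2.1 m} with hDdef
  have hDanti : Antitone D := antitone_nat_of_succ_le fun m p hp => by
    have hp' : p.1.1 (m + 1) = p.2.1 (m + 1) := hp
    show p.1.1 m = p.2.1 m
    rw [p.1.2 m, p.2.2 m, hp']
  have hDclosed : ∀ m, IsClosed (D m) := fun m =>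
    isClosed_eq ((continuous_apply m).comp (continuous_subtype_val.comp continuous_fst))
      ((continuous_apply m).comp (continuous_subtype_val.comp continuous_snd))
  have hDcpct : ∀ m, IsCompact (D m) := fun m => (hDclosed m).isCompact
  have hInter : ∀ p ∈ ⋂ m, D m, U ∈ nhds p := by
    intro p hp
    have hpe : p.1 = p.2 := Subtype.ext (funext fun m => mem_iInter.mp hp m)
    refine hUopen.mem_nhds ?_
    intro j hj
    rw [hpe]
    simpa using half_pos hε
  obtain ⟨m₀, hm₀⟩ := exists_subset_nhds_of_isCompact' hDanti.directed_ge hDcpct hDclosed hInter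
  refine ⟨m₀, fun m hm j hj => ⟨?_, ?_⟩⟩
  · intro x
    have key : ∀ y₁ ∈ bondMap gs hj '' Ttrans g n m x,
        ∀ y₂ ∈ bondMap gs hj '' Ttrans g n m x, dist y₁ y₂ ≤ ε / 2 := by
      rintro _ ⟨_, ⟨z₁, hz₁, rfl⟩, rfl⟩ _ ⟨_, ⟨z₂, hz₂, rfl⟩, rfl⟩
      rw [bondMap_eval gs (g z₁).2 hj, bondMap_eval gs (g z₂).2 hj]
      have hmem : (z₁, z₂) ∈ D m := by
        show z₁.1 m = z₂.1 m
        rw [hz₁, hz₂]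
      exact le_of_lt (hm₀ (hDanti hm hmem) j hj)
    calc diam (bondMap gs hj '' Ttrans g n m x) ≤ ε / 2 :=
          diam_le_of_forall_dist_le (le_of_lt (half_pos hε)) key
      _ < ε := half_lt_self hε
  · intro z
    exact ⟨(g z).1 n, ⟨z, rfl, rfl⟩, bondMap_eval gs (g z).2 hj⟩
end

section
/- Let {X_ℓ, f_ℓ} and {Y_ℓ, g_ℓ} be inverse sequences of compact metric spaces with surjective continuous bonding functions, let (n_ℓ) and (m_ℓ) be sequences of positive integers with m_{k+1} ≥ m_k, n_{k+1} > n_k, and m_k ≥ n_k for each k, and let (H_ℓ) be a sequence of upper semicontinuous set-valued functions H_ℓ : X_{m_ℓ} ⊸ Y_{n_ℓ} such that for each positive integer j and each x ∈ varprojlim{X_ℓ, f_ℓ}, lim_{k→∞} diam(g_{j,n_k}(H_k(p_{m_k}(x)))) = 0. If f, g : varprojlim{X_ℓ, f_ℓ} → varprojlim{Y_ℓ, g_ℓ} are continuous functions such that for every positive integer k, every j ∈ {1, …, n_k}, and every x ∈ varprojlim{X_ℓ, f_ℓ}, both q_j(g(x)) ∈ g_{j,n_k}(H_k(p_{m_k}(x)))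 and q_j(f(x)) ∈ g_{j,n_k}(H_k(p_{m_k}(x))), then f = g. -/
open Metric Filter Set Function

theorem stmt8
    {X Y : ℕ → Type*} [∀ n, MetricSpace (X n)] [∀ n, CompactSpace (X n)]
    [∀ n, MetricSpace (Y n)] [∀ n, CompactSpace (Y n)]
    (f : ∀ n, X (n + 1) → X n) (gs : ∀ n, Y (n + 1) → Y n)
    (hfc : ∀ n, Continuous (f n)) (hfs : ∀ n, Surjective (f n))
    (hgc : ∀ n, Continuous (gs n)) (hgs : ∀ n, Surjective (gs n))
    (ns ms : ℕ → ℕ)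
    (hms : ∀ k, ms k ≤ ms (k + 1)) (hns : ∀ k, ns k < ns (k + 1))
    (hnm : ∀ k, ns k ≤ ms k)
    (H : ∀ k, X (ms k) → Set (Y (ns k))) (hH : ∀ k, IsUSC (H k))
    (hb : ∀ j : ℕ, ∀ z : ↥(invLim X f),
      Tendsto (fun k =>
          diam (if hj : j ≤ ns k then
            bondMap gs hj '' H k (z.1 (ms k))
          else (∅ : Set (Y j))))
        atTop (nhds (0 : ℝ)))
    (φ ψ : ↥(invLim X f) → ↥(invLim Y gs))
    (hφ : Continuous φ) (hψ : Continuous ψ)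
    (hφmem : ∀ k j : ℕ, ∀ hj : j ≤ ns k, ∀ z : ↥(invLim X f),
      (φ z).1 j ∈ bondMap gs hj '' H k (z.1 (ms k)))
    (hψmem : ∀ k j : ℕ, ∀ hj : j ≤ ns k, ∀ z : ↥(invLim X f),
      (ψ z).1 j ∈ bondMap gs hj '' H k (z.1 (ms k))) :
    φ = ψ := by
  funext z
  ext j
  have hmono : StrictMono ns := strictMono_nat_of_lt_succ hns
  have hev : ∀ᶠ k in atTop, j ≤ ns k := by
    filter_upwards [eventually_ge_atTop j] with k hk
    exact hk.trans (hmono.le_apply)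
  have hle : ∀ᶠ k in atTop,
      dist ((φ z).1 j) ((ψ z).1 j) ≤
        diam (if hj : j ≤ ns k then bondMap gs hj '' H k (z.1 (ms k))
          else (∅ : Set (Y j))) := by
    filter_upwards [hev] with k hj
    rw [dif_pos hj]
    exact dist_le_diam_of_mem
      ((isCompact_univ.isBounded).subset (subset_univ _))
      (hφmem k j hj z) (hψmem k j hj z)
  have h0 : dist ((φ z).1 j) ((ψ z).1 j) ≤ 0 :=
    ge_of_tendsto (hb j z) hle
  exact dist_le_zero.mp h0
end

section
/- Let {X_ℓ, F_ℓ} be an inverse sequence of compact metric spaces X_ℓ with upper semicontinuous set-valued bonding functions F_ℓ : X_{ℓ+1} ⊸ X_ℓ. The following are equivalent: (1) the inverse limit lim⊸{X_ℓ, F_ℓ} does not have the fixed point property; (2) there is a sequence (H_ℓ) of upper semicontinuous set-valued functions H_ℓ : ⋆_{i=1}^{ℓ+1}Γ(F_i⁻¹) ⊸ ⋆_{i=1}^{ℓ}Γ(F_i⁻¹) such that (a) for each positive integer k, each (x_1, …, x_{k+3}) ∈ ⋆_{i=1}^{k+2}Γ(F_i⁻¹) and each (z_1, …, z_{k+2})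 ∈ H_{k+1}(x_1, …, x_{k+3}), one has (z_1, …, z_{k+1}) ∈ H_k(x_1, …, x_{k+2}); (b) for each positive integer j and each x = (x_1, x_2, …) ∈ lim⊸{X_ℓ, F_ℓ}, lim_{k→∞} diam(𝓗_{j,k}(x)) = 0, where for k > j, 𝓗_{j,k}(x) is the set of all (z_1, …, z_{j+1}) ∈ ⋆_{i=1}^{j}Γ(F_i⁻¹) for which there exists (y_1, …, y_{k+1}) ∈ H_k(x_1, …, x_{k+2}) with (y_1, …, y_{j+1}) = (z_1, …, z_{j+1}); and (c) there is a positive integer k such that (x_1, …, x_{k+1}) ∉ H_k(x_1, …, x_{k+2}) for each (x_1, …, x_{k+2}) ∈ ⋆_{i=1}^{k+1}Γ(F_i⁻¹). -/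
open Metric Filter Set Function

/-- The inverse limit of an inverse sequence `{X n, F n}` of spaces with
set-valued bonding functions `F n : X (n+1) ⊸ X n`. -/
def invLimSV (X : ℕ → Type*) (F : ∀ n, X (n + 1) → Set (X n)) : Set (∀ n, X n) :=
  {x | ∀ n, x n ∈ F n (x (n + 1))}

/-- The Mahavier product `⋆_{i=0}^{n-1} Γ(F_i⁻¹)`: all tuples `(x_0, …, x_n)`
with `x_i ∈ F i (x_{i+1})` for all `i < n`. -/
def mahavier (X : ℕ → Type*) (F : ∀ n, X (n + 1) → Set (X n)) (n : ℕ) :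
    Set (∀ i : Fin (n + 1), X i.1) :=
  {x | ∀ i : Fin n,
    x ⟨i.1, Nat.lt_succ_of_lt i.2⟩ ∈ F i.1 (x ⟨i.1 + 1, Nat.succ_lt_succ i.2⟩)}

set_option linter.unusedSectionVars false
set_option linter.unusedVariables false
set_option maxHeartbeats 1000000

section Stmt16Proof

variable {X : ℕ → Type*} [∀ n, MetricSpace (X n)] [∀ n, CompactSpace (X n)]

noncomputable local instance : MetricSpace (∀ n, X n) := PiCountable.metricSpace

/-- Truncation of tuples. -/
def trc {m m' : ℕ} (h : m' ≤ m) (x : ∀ i : Fin m, X i.1) : ∀ i : Fin m', X i.1 :=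
  fun i => x ⟨i.1, lt_of_lt_of_le i.2 h⟩

/-- Prefix of an infinite sequence. -/
def pre (p : ∀ n, X n) (m : ℕ) : ∀ i : Fin m, X i.1 := fun i => p i.1

lemma continuous_trc {m m' : ℕ} (h : m' ≤ m) : Continuous (trc (X := X) h) :=
  continuous_pi fun i => continuous_apply _

lemma continuous_preAt (m : ℕ) : Continuous (fun p : ∀ n, X n => pre p m) :=
  continuous_pi fun i => continuous_apply _

/-- Cast a tuple along an equality of (shifted) lengths. -/
def castT {k k' : ℕ} (e : k = k') (y : ∀ i : Fin (k + 2), X i.1) : ∀ i : Fin (k' + 2), X i.1 :=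
  fun i => y ⟨i.1, by omega⟩

lemma castT_rfl {k : ℕ} (y : ∀ i : Fin (k + 2), X i.1) : castT rfl y = y :=
  funext fun i => rfl

lemma mem_castT {k k' : ℕ} (e : k = k') (P : ∀ m : ℕ, (∀ i : Fin (m + 2), X i.1) → Prop)
    {y : ∀ i : Fin (k + 2), X i.1} (h : P k y) : P k' (castT e y) := by
  subst e
  rw [castT_rfl]
  exact h

variable {F : ∀ n, X (n + 1) → Set (X n)}

lemma isClosed_level (hF : ∀ n, IsUSC (F n)) (n : ℕ) :
    IsClosed {x : ∀ n, X n | x n ∈ F n (x (n + 1))} :=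
  ((hF n).2.2).preimage ((continuous_apply (n + 1)).prodMk (continuous_apply n))

lemma isClosed_invLimSV (hF : ∀ n, IsUSC (F n)) : IsClosed (invLimSV X F) := by
  have h : invLimSV X F = ⋂ n, {x : ∀ n, X n | x n ∈ F n (x (n + 1))} := by
    ext x; simp [invLimSV, Set.mem_iInter]
  rw [h]; exact isClosed_iInter (isClosed_level hF)

lemma isClosed_mahavier (hF : ∀ n, IsUSC (F n)) (n : ℕ) : IsClosed (mahavier X F n) := by
  have h : mahavier X F n = ⋂ i : Fin n,
      {x : ∀ i : Fin (n + 1), X i.1 |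
        x ⟨i.1, Nat.lt_succ_of_lt i.2⟩ ∈ F i.1 (x ⟨i.1 + 1, Nat.succ_lt_succ i.2⟩)} := by
    ext x; simp [mahavier, Set.mem_iInter]
  rw [h]
  refine isClosed_iInter fun i => ?_
  have h2 : {x : ∀ i : Fin (n + 1), X i.1 |
        x ⟨i.1, Nat.lt_succ_of_lt i.2⟩ ∈ F i.1 (x ⟨i.1 + 1, Nat.succ_lt_succ i.2⟩)} =
      (fun x : ∀ i : Fin (n + 1), X i.1 =>
        ((x ⟨i.1 + 1, Nat.succ_lt_succ i.2⟩, x ⟨i.1, Nat.lt_succ_of_lt i.2⟩) :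
          X (i.1 + 1) × X i.1)) ⁻¹' {p : X (i.1 + 1) × X i.1 | p.2 ∈ F i.1 p.1} := rfl
  rw [h2]
  exact ((hF i.1).2.2).preimage
    ((continuous_apply (⟨i.1 + 1, Nat.succ_lt_succ i.2⟩ : Fin (n + 1))).prodMk
      (continuous_apply (⟨i.1, Nat.lt_succ_of_lt i.2⟩ : Fin (n + 1))))

lemma mem_mahavier_trc {n m : ℕ} (h : m + 1 ≤ n + 1) {x : ∀ i : Fin (n + 1), X i.1}
    (hx : x ∈ mahavier X F n) : trc h x ∈ mahavier X F m :=
  fun i => hx ⟨i.1, by omega⟩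

lemma pre_mem_mahavier {p : ∀ n, X n} (hp : p ∈ invLimSV X F) (n : ℕ) :
    pre p (n + 1) ∈ mahavier X F n :=
  fun i => hp i.1

lemma nonempty_mahavier : ∀ (n : ℕ) {Y : ℕ → Type*} (G : ∀ n, Y (n + 1) → Set (Y n))
    (hne : ∀ n, Nonempty (Y n)) (hG : ∀ n a, (G n a).Nonempty),
    (mahavier Y G n).Nonempty := by
  intro n
  induction n with
  | zero =>
    intro Y G hne hG
    exact ⟨fun i => (hne i.1).some, fun i => i.elim0⟩
  | succ n ih =>
    intro Y G hne hG
    obtain ⟨y, hy⟩ := ih (Y := fun m => Y (m + 1)) (fun m => G (m + 1))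
      (fun m => hne (m + 1)) (fun m a => hG (m + 1) a)
    obtain ⟨x0, hx0⟩ := hG 0 (y ⟨0, Nat.succ_pos n⟩)
    refine ⟨fun i => (match i with
      | ⟨0, _⟩ => x0
      | ⟨m + 1, h⟩ => y ⟨m, Nat.lt_of_succ_lt_succ h⟩ : Y i.1), ?_⟩
    rintro ⟨iv, hiv⟩
    cases iv with
    | zero => exact hx0
    | succ m => exact hy ⟨m, Nat.lt_of_succ_lt_succ hiv⟩

lemma nonempty_invLimSV (hF : ∀ n, IsUSC (F n)) (hne : ∀ n, Nonempty (X n)) :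
    (invLimSV X F).Nonempty := by
  have hG : ∀ n a, (F n a).Nonempty := fun n => (hF n).1
  set L : ℕ → Set (∀ n, X n) := fun N => {x | ∀ n, n < N → x n ∈ F n (x (n + 1))} with hL
  have hLne : ∀ N, (L N).Nonempty := by
    intro N
    obtain ⟨m, hm⟩ := nonempty_mahavier N F hne hG
    refine ⟨fun n => if h : n < N + 1 then m ⟨n, h⟩ else (hne n).some, fun n hn => ?_⟩
    show (if h : n < N + 1 then m ⟨n, h⟩ else (hne n).some) ∈
      F n (if h : n + 1 < N + 1 then m ⟨n + 1, h⟩ else (hne (n + 1)).some)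
    rw [dif_pos (show n < N + 1 by omega), dif_pos (show n + 1 < N + 1 by omega)]
    exact hm ⟨n, hn⟩
  have hmono : ∀ N, L (N + 1) ⊆ L N := fun N x hx n hn => hx n (by omega)
  have hclosed : ∀ N, IsClosed (L N) := by
    intro N
    have h1 : L N = ⋂ n, ⋂ (_ : n < N), {x : ∀ n, X n | x n ∈ F n (x (n + 1))} := by
      ext x; simp [hL, Set.mem_iInter]
    rw [h1]
    exact isClosed_iInter fun n => isClosed_iInter fun _ => isClosed_level hF n
  have hiter : invLimSV X F = ⋂ N, L N := by
    ext x
    simp only [invLimSV, mem_setOf_eq, Set.mem_iInter, hL]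
    exact ⟨fun h N n hn => h n, fun h n => h (n + 1) n (by omega)⟩
  rw [hiter]
  exact IsCompact.nonempty_iInter_of_sequence_nonempty_isCompact_isClosed L hmono hLne
    ((hclosed 0).isCompact) hclosed

lemma diam_tendsto_zero {Z : Type*} [MetricSpace Z] {K : ℕ → Set Z} {a : Z}
    (hcomp : ∀ t, IsCompact (K t)) (hmono : ∀ t, K (t + 1) ⊆ K t)
    (huniq : ∀ w, (∀ t, w ∈ K t) → w = a) :
    Tendsto (fun t => diam (K t)) atTop (nhds 0) := by
  have hmono' : ∀ {s t : ℕ}, s ≤ t → K t ⊆ K s := by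
    intro s t hst
    induction hst with
    | refl => exact Subset.rfl
    | step h ih => exact (hmono _).trans ih
  rw [Metric.tendsto_atTop]
  intro ε hε
  have hkey : ∃ N, K N ⊆ ball a (ε / 4) := by
    by_contra hcon
    push_neg at hcon
    have hne2 : ∀ N, (K N ∩ (ball a (ε / 4))ᶜ).Nonempty := by
      intro N
      obtain ⟨w, hw1, hw2⟩ := not_subset.1 (hcon N)
      exact ⟨w, hw1, hw2⟩
    obtain ⟨w, hw⟩ := IsCompact.nonempty_iInter_of_sequence_nonempty_isCompact_isClosed
      (fun N => K N ∩ (ball a (ε / 4))ᶜ)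
      (fun N => inter_subset_inter (hmono N) Subset.rfl) hne2
      ((hcomp 0).inter_right isOpen_ball.isClosed_compl)
      (fun N => ((hcomp N).isClosed).inter isOpen_ball.isClosed_compl)
    rw [Set.mem_iInter] at hw
    have hwa : w = a := huniq w fun t => (hw t).1
    exact (hw 0).2 (by rw [hwa]; exact mem_ball_self (by positivity))
  obtain ⟨N, hN⟩ := hkey
  refine ⟨N, fun n hn => ?_⟩
  have hsub : K n ⊆ ball a (ε / 4) := (hmono' hn).trans hN
  have hd : diam (K n) ≤ ε / 2 := by
    refine le_trans (diam_mono hsub isBounded_ball) ?_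
    refine le_trans (diam_ball (by positivity)) (by linarith)
  rw [Real.dist_eq, sub_zero, abs_of_nonneg diam_nonneg]
  linarith

lemma dist_le_of_prefix_eq {p q : ∀ n, X n} {m : ℕ} (h : ∀ i < m, p i = q i) :
    dist p q ≤ (1 / 2) ^ m * 2 := by
  rw [PiCountable.dist_eq_tsum]
  have hs := PiCountable.dist_summable p q
  rw [← hs.sum_add_tsum_nat_add m]
  have h1 : ∑ i ∈ Finset.range m,
      min ((1 / 2) ^ (Encodable.encode i) : ℝ) (dist (p i) (q i)) = 0 := by
    apply Finset.sum_eq_zero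
    intro i hi
    rw [h i (Finset.mem_range.1 hi), dist_self]
    exact min_eq_right (by positivity)
  rw [← one_div] at hs ⊢
  rw [h1, zero_add]
  calc ∑' i : ℕ, min ((1 / 2) ^ (Encodable.encode (i + m)) : ℝ) (dist (p (i + m)) (q (i + m)))
      ≤ ∑' i : ℕ, ((1 / 2) : ℝ) ^ (i + m) := by
        refine Summable.tsum_le_tsum (fun i => ?_) ((summable_nat_add_iff m).2 hs) ?_
        · simpa [Encodable.encode_nat] using
            min_le_left ((1 / 2) ^ (i + m) : ℝ) (dist (p (i + m)) (q (i + m)))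
        · exact (summable_nat_add_iff m).2 summable_geometric_two
    _ = (1 / 2) ^ m * 2 := by
        simp only [pow_add, mul_comm]
        rw [tsum_mul_left, tsum_geometric_two]
        ring

/-! ### The sets `𝓗_{j,t}(x)` -/

def SS (H : ∀ k : ℕ, (∀ i : Fin (k + 3), X i.1) → Set (∀ i : Fin (k + 2), X i.1))
    (F : ∀ n, X (n + 1) → Set (X n)) (j t : ℕ) (x : ∀ n, X n) :
    Set (∀ i : Fin (j + 1), X i.1) :=
  {z | z ∈ mahavier X F j ∧
    ∃ y ∈ H (t + j) (pre x (t + j + 3)),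
      ∀ i : Fin (j + 1), y ⟨i.1, lt_of_lt_of_le i.2 (Nat.le_succ_of_le (Nat.succ_le_succ (Nat.le_add_left j t)))⟩ = z i}

lemma ss_eq (H : ∀ k : ℕ, (∀ i : Fin (k + 3), X i.1) → Set (∀ i : Fin (k + 2), X i.1))
    (j t : ℕ) (x : ∀ n, X n) :
    SS H F j t x = mahavier X F j ∩
      (trc (show j + 1 ≤ t + j + 2 by omega)) '' (H (t + j) (pre x (t + j + 3))) := by
  ext z
  simp only [SS, mem_setOf_eq, mem_inter_iff, mem_image]
  constructor
  · rintro ⟨hm, y, hy, hc⟩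
    exact ⟨hm, y, hy, funext fun i => hc i⟩
  · rintro ⟨hm, y, hy, rfl⟩
    exact ⟨hm, y, hy, fun i => rfl⟩

lemma ss_compact {H : ∀ k : ℕ, (∀ i : Fin (k + 3), X i.1) → Set (∀ i : Fin (k + 2), X i.1)}
    (hF : ∀ n, IsUSC (F n)) {j t : ℕ} {x : ∀ n, X n}
    (hval : IsClosed (H (t + j) (pre x (t + j + 3)))) :
    IsCompact (SS H F j t x) := by
  rw [ss_eq]
  exact ((hval.isCompact).image (continuous_trc _)).inter_left (isClosed_mahavier hF j)

lemma ss_antitone {H : ∀ k : ℕ, (∀ i : Fin (k + 3), X i.1) → Set (∀ i : Fin (k + 2), X i.1)}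
    (ha : ∀ j : ℕ, ∀ x ∈ mahavier X F (j + 3), ∀ z ∈ H (j + 1) x,
      (fun i : Fin (j + 2) => z ⟨i.1, lt_of_lt_of_le i.2 (Nat.le_succ _)⟩) ∈
        H j (fun i : Fin (j + 3) => x ⟨i.1, lt_of_lt_of_le i.2 (Nat.le_succ _)⟩))
    {x : ∀ n, X n} (hx : x ∈ invLimSV X F) (j t : ℕ) :
    SS H F j (t + 1) x ⊆ SS H F j t x := by
  intro z hz
  obtain ⟨hm, y, hy, hc⟩ := hz
  have hy' := mem_castT (show t + 1 + j = t + j + 1 by omega)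
    (fun m w => w ∈ H m (pre x (m + 3))) hy
  refine ⟨hm, trc (by omega) (castT (show t + 1 + j = t + j + 1 by omega) y), ?_, fun i => hc i⟩
  exact ha (t + j) (pre x (t + j + 4)) (pre_mem_mahavier hx (t + j + 3)) _ hy'

lemma ss_nonempty {H : ∀ k : ℕ, (∀ i : Fin (k + 3), X i.1) → Set (∀ i : Fin (k + 2), X i.1)}
    (hvals : ∀ k, ∀ x ∈ mahavier X F (k + 2),
      (H k x).Nonempty ∧ IsClosed (H k x) ∧ H k x ⊆ mahavier X F (k + 1))
    {x : ∀ n, X n} (hx : x ∈ invLimSV X F) (j t : ℕ) :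
    (SS H F j t x).Nonempty := by
  obtain ⟨y, hy⟩ := (hvals (t + j) (pre x (t + j + 3)) (pre_mem_mahavier hx (t + j + 2))).1
  refine ⟨trc (by omega) y, ?_, y, hy, fun i => rfl⟩
  exact mem_mahavier_trc (by omega)
    ((hvals (t + j) (pre x (t + j + 3)) (pre_mem_mahavier hx (t + j + 2))).2.2 hy)

/-! ### Empty case -/

lemma lhs_of_empty (hne : ¬ ∀ n, Nonempty (X n)) : ¬ HasFPP ↥(invLimSV X F) := by
  intro hFPP
  obtain ⟨p, -⟩ := hFPP id continuous_id
  push_neg at hne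
  obtain ⟨n, hn⟩ := hne
  exact hn.false (p.1 n)

/-! ### Backward direction -/

lemma backward (hF : ∀ n, IsUSC (F n))
    (hR : ∃ H : ∀ k : ℕ, (∀ i : Fin (k + 3), X i.1) → Set (∀ i : Fin (k + 2), X i.1),
      (∀ k, ∀ x ∈ mahavier X F (k + 2),
        (H k x).Nonempty ∧ IsClosed (H k x) ∧ H k x ⊆ mahavier X F (k + 1)) ∧
      (∀ k, IsClosed {p : (∀ i : Fin (k + 3), X i.1) × (∀ i : Fin (k + 2), X i.1) |
        p.1 ∈ mahavier X F (k + 2) ∧ p.2 ∈ H k p.1}) ∧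
      (∀ j : ℕ, ∀ x ∈ mahavier X F (j + 3), ∀ z ∈ H (j + 1) x,
        (fun i : Fin (j + 2) => z ⟨i.1, lt_of_lt_of_le i.2 (Nat.le_succ _)⟩) ∈
          H j (fun i : Fin (j + 3) => x ⟨i.1, lt_of_lt_of_le i.2 (Nat.le_succ _)⟩)) ∧
      (∀ j : ℕ, ∀ x : ↥(invLimSV X F),
        Tendsto (fun t : ℕ =>
            diam {z : ∀ i : Fin (j + 1), X i.1 |
              z ∈ mahavier X F j ∧
              ∃ y ∈ H (t + j) (fun i : Fin (t + j + 3) => x.1 i.1),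
                ∀ i : Fin (j + 1), y ⟨i.1, lt_of_lt_of_le i.2 (Nat.le_succ_of_le (Nat.succ_le_succ (Nat.le_add_left j t)))⟩ = z i})
          atTop (nhds (0 : ℝ))) ∧
      (∃ k : ℕ, ∀ x ∈ mahavier X F (k + 2),
        (fun i : Fin (k + 2) => x ⟨i.1, lt_of_lt_of_le i.2 (Nat.le_succ _)⟩) ∉ H k x)) :
    ¬ HasFPP ↥(invLimSV X F) := by
  obtain ⟨H, hvals, hgraph, ha, hb, k0, hc⟩ := hR
  intro hFPP
  by_cases hne : ∀ n, Nonempty (X n)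
  swap
  · exact lhs_of_empty hne hFPP
  haveI hIcs : CompactSpace ↥(invLimSV X F) :=
    isCompact_iff_compactSpace.mp (isClosed_invLimSV hF).isCompact
  have hZne : ∀ (j : ℕ) (x : ↥(invLimSV X F)), (⋂ t, SS H F j t x.1).Nonempty := by
    intro j x
    exact IsCompact.nonempty_iInter_of_sequence_nonempty_isCompact_isClosed _
      (fun t => ss_antitone ha x.2 j t) (fun t => ss_nonempty hvals x.2 j t)
      (ss_compact hF ((hvals _ _ (pre_mem_mahavier x.2 _)).2.1))
      (fun t => (ss_compact hF ((hvals _ _ (pre_mem_mahavier x.2 _)).2.1)).isClosed)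
  choose zfun hzfun using hZne
  have hzmem : ∀ j (x : ↥(invLimSV X F)) t, zfun j x ∈ SS H F j t x.1 :=
    fun j x t => Set.mem_iInter.1 (hzfun j x) t
  have hdiam : ∀ (j : ℕ) (x : ↥(invLimSV X F)),
      Tendsto (fun t => diam (SS H F j t x.1)) atTop (nhds (0 : ℝ)) := fun j x => hb j x
  have huniq : ∀ (j : ℕ) (x : ↥(invLimSV X F)) (w : ∀ i : Fin (j + 1), X i.1),
      (∀ t, w ∈ SS H F j t x.1) → w = zfun j x := by
    intro j x w hw
    have hd : ∀ t : ℕ, dist w (zfun j x) ≤ diam (SS H F j t x.1) := fun t =>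
      dist_le_diam_of_mem
        (ss_compact hF ((hvals _ _ (pre_mem_mahavier x.2 _)).2.1)).isBounded
        (hw t) (hzmem j x t)
    have hle : dist w (zfun j x) ≤ 0 := ge_of_tendsto (hdiam j x) (Eventually.of_forall hd)
    exact eq_of_dist_eq_zero (le_antisymm hle dist_nonneg)
  have hcoh : ∀ (j : ℕ) (x : ↥(invLimSV X F)),
      (fun i : Fin (j + 1) => zfun (j + 1) x ⟨i.1, by omega⟩) = zfun j x := by
    intro j x
    apply huniq
    intro t
    have h1 := hzmem (j + 1) x t
    obtain ⟨hm1, y, hy, hcs⟩ := h1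
    have hy' := mem_castT (show t + (j + 1) = t + 1 + j by omega)
      (fun m w => w ∈ H m (pre x.1 (m + 3))) hy
    have hmem2 : (fun i : Fin (j + 1) => zfun (j + 1) x ⟨i.1, by omega⟩) ∈
        SS H F j (t + 1) x.1 := by
      refine ⟨mem_mahavier_trc (by omega) hm1, _, hy', fun i => ?_⟩
      exact hcs ⟨i.1, by omega⟩
    exact ss_antitone ha x.2 j t hmem2
  set g0 : ↥(invLimSV X F) → ∀ n, X n := fun x n => zfun n x ⟨n, Nat.lt_succ_self n⟩ with hg0
  have hg0coord : ∀ (x : ↥(invLimSV X F)) (j i : ℕ) (hij : i < j + 1),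
      zfun j x ⟨i, hij⟩ = g0 x i := by
    intro x j
    induction j with
    | zero =>
      intro i hij
      have hi0 : i = 0 := by omega
      subst hi0
      rfl
    | succ j ihj =>
      intro i hij
      rcases Nat.lt_or_ge i (j + 1) with hlt | hge
      · have hstep : zfun (j + 1) x ⟨i, hij⟩ = zfun j x ⟨i, hlt⟩ :=
          congrFun (hcoh j x) ⟨i, hlt⟩
        exact hstep.trans (ihj i hlt)
      · have hi1 : i = j + 1 := by omega
        subst hi1
        rfl
  have hg0mem : ∀ x, g0 x ∈ invLimSV X F := by
    intro x n
    have hm1 : zfun (n + 1) x ∈ mahavier X F (n + 1) := (hzmem (n + 1) x 0).1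
    have h2 := hm1 ⟨n, by omega⟩
    rw [hg0coord x (n + 1) n (by omega), hg0coord x (n + 1) (n + 1) (by omega)] at h2
    exact h2
  set g : ↥(invLimSV X F) → ↥(invLimSV X F) := fun x => ⟨g0 x, hg0mem x⟩ with hgdef
  have hchar : ∀ (x : ↥(invLimSV X F)) (j : ℕ), pre (g x).1 (j + 1) = zfun j x := by
    intro x j
    funext i
    exact (hg0coord x j i.1 i.2).symm
  have hgcont : Continuous g := by
    rw [continuous_iff_isClosed]
    intro C hC
    have hGr : IsClosed {p : ↥(invLimSV X F) × ↥(invLimSV X F) | p.1 = g p.2} := by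
      apply IsSeqClosed.isClosed
      intro u p hu hup
      have hx2 : Tendsto (fun m => (u m).2) atTop (nhds p.2) :=
        (continuous_snd.tendsto p).comp hup
      have hx1 : Tendsto (fun m => (u m).1) atTop (nhds p.1) :=
        (continuous_fst.tendsto p).comp hup
      have hs : ∀ j t, pre p.1.1 (j + 1) ∈ SS H F j t p.2.1 := by
        intro j t
        have hmm : ∀ m, ∃ y, y ∈ H (t + j) (pre ((u m).2).1 (t + j + 3)) ∧
            ∀ i : Fin (j + 1), y ⟨i.1, by omega⟩ = ((u m).1).1 i.1 := by
          intro m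
          have h5 : pre ((u m).1).1 (j + 1) ∈ SS H F j t ((u m).2).1 := by
            have e2 : pre ((u m).1).1 (j + 1) = zfun j ((u m).2) := by
              have e0 : (u m).1 = g ((u m).2) := hu m
              rw [e0]
              exact hchar ((u m).2) j
            exact mem_of_eq_of_mem e2 (hzmem j ((u m).2) t)
          obtain ⟨-, y, hy, hcs⟩ := h5
          exact ⟨y, hy, fun i => hcs i⟩
        choose w hw1 hw2 using hmm
        obtain ⟨wlim, -, φ, hφ, hφt⟩ := isCompact_univ.tendsto_subseq
          (fun m => (mem_univ (w m)))
        have hpre2 : Tendsto (fun m => pre ((u (φ m)).2).1 (t + j + 3)) atTop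
            (nhds (pre p.2.1 (t + j + 3))) := by
          have hc2 : Continuous (fun q : ↥(invLimSV X F) => pre q.1 (t + j + 3)) :=
            (continuous_preAt _).comp continuous_subtype_val
          exact (hc2.tendsto _).comp (hx2.comp hφ.tendsto_atTop)
        have hclmem := (hgraph (t + j)).mem_of_tendsto (hpre2.prodMk_nhds hφt)
          (Eventually.of_forall fun m =>
            ⟨pre_mem_mahavier ((u (φ m)).2).2 (t + j + 2), hw1 (φ m)⟩)
        refine ⟨pre_mem_mahavier p.1.2 j, wlim, hclmem.2, ?_⟩
        intro i
        have hco : Tendsto (fun m => w (φ m) ⟨i.1, by omega⟩) atTop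
            (nhds (wlim ⟨i.1, by omega⟩)) :=
          ((continuous_apply _).tendsto _).comp hφt
        have hco2 : Tendsto (fun m => ((u (φ m)).1).1 i.1) atTop (nhds (p.1.1 i.1)) := by
          have hc3 : Continuous (fun q : ↥(invLimSV X F) => q.1 i.1) :=
            (continuous_apply i.1).comp continuous_subtype_val
          exact (hc3.tendsto _).comp (hx1.comp hφ.tendsto_atTop)
        have hco' := hco.congr (fun m => hw2 (φ m) i)
        exact tendsto_nhds_unique hco' hco2
      have hzs : ∀ j, pre p.1.1 (j + 1) = zfun j p.2 := fun j => huniq j p.2 _ (hs j)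
      show p.1 = g p.2
      apply Subtype.ext
      funext n
      exact congrFun (hzs n) ⟨n, Nat.lt_succ_self n⟩
    have himg : g ⁻¹' C = Prod.snd ''
        ({p : ↥(invLimSV X F) × ↥(invLimSV X F) | p.1 = g p.2} ∩ (C ×ˢ univ)) := by
      ext q
      constructor
      · intro hq2
        exact ⟨(g q, q), ⟨rfl, hq2, mem_univ _⟩, rfl⟩
      · rintro ⟨⟨a, b⟩, ⟨hab, haC, -⟩, rfl⟩
        show g b ∈ C
        rw [← hab]
        exact haC
    rw [himg]
    exact isClosedMap_snd_of_compactSpace _ (hGr.inter (hC.prod isClosed_univ))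
  obtain ⟨q, hq⟩ := hFPP g hgcont
  have e0 : (g q).1 = q.1 := congrArg Subtype.val hq
  have hq1 : ∀ j t, pre q.1 (j + 1) ∈ SS H F j t q.1 := by
    intro j t
    have e1 : pre q.1 (j + 1) = zfun j q := by
      rw [← e0]
      exact hchar q j
    exact mem_of_eq_of_mem e1 (hzmem j q t)
  obtain ⟨-, y, hy, hcs⟩ := hq1 (k0 + 1) 0
  have hy' := mem_castT (show 0 + (k0 + 1) = k0 + 1 by omega)
    (fun m w => w ∈ H m (pre q.1 (m + 3))) hy
  have h2 := ha k0 (pre q.1 (k0 + 4)) (pre_mem_mahavier q.2 (k0 + 3)) _ hy'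
  have h3 : (fun i : Fin (k0 + 2) =>
        castT (show 0 + (k0 + 1) = k0 + 1 by omega) y ⟨i.1, by omega⟩)
      = (fun i : Fin (k0 + 2) => pre q.1 (k0 + 3) ⟨i.1, by omega⟩) :=
    funext fun i => hcs ⟨i.1, by omega⟩
  exact hc (pre q.1 (k0 + 3)) (pre_mem_mahavier q.2 (k0 + 2))
    (mem_of_eq_of_mem h3.symm h2)

/-! ### Forward direction -/

variable (F) in
def Qset (k : ℕ) (x : ∀ i : Fin (k + 3), X i.1) : Set ↥(invLimSV X F) :=
  {q | ∃ p : ∀ n, X n, (∀ i : Fin (k + 3), p i.1 = x i) ∧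
    dist p q.1 = infDist p (invLimSV X F)}

variable (F) in
def Hfwd (g : ↥(invLimSV X F) → ↥(invLimSV X F)) (k : ℕ) (x : ∀ i : Fin (k + 3), X i.1) :
    Set (∀ i : Fin (k + 2), X i.1) :=
  (fun q : ↥(invLimSV X F) => pre (g q).1 (k + 2)) '' Qset F k x

lemma isCompact_Qset (hF : ∀ n, IsUSC (F n)) (k : ℕ) (x : ∀ i : Fin (k + 3), X i.1) :
    IsCompact (Qset F k x) := by
  haveI : CompactSpace ↥(invLimSV X F) :=
    isCompact_iff_compactSpace.mp (isClosed_invLimSV hF).isCompact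
  have himg : Qset F k x = Prod.snd '' {pq : (∀ n, X n) × ↥(invLimSV X F) |
      (∀ i : Fin (k + 3), pq.1 i.1 = x i) ∧
      dist pq.1 pq.2.1 = infDist pq.1 (invLimSV X F)} := by
    ext q
    constructor
    · rintro ⟨p, h1, h2⟩
      exact ⟨(p, q), ⟨h1, h2⟩, rfl⟩
    · rintro ⟨⟨p, q'⟩, ⟨h1, h2⟩, rfl⟩
      exact ⟨p, h1, h2⟩
  rw [himg]
  refine IsCompact.image ?_ continuous_snd
  have h2 : {pq : (∀ n, X n) × ↥(invLimSV X F) |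
      (∀ i : Fin (k + 3), pq.1 i.1 = x i) ∧
      dist pq.1 pq.2.1 = infDist pq.1 (invLimSV X F)} =
    {pq : (∀ n, X n) × ↥(invLimSV X F) | ∀ i : Fin (k + 3), pq.1 i.1 = x i} ∩
    {pq : (∀ n, X n) × ↥(invLimSV X F) |
      dist pq.1 pq.2.1 = infDist pq.1 (invLimSV X F)} := rfl
  rw [h2]
  refine IsClosed.isCompact (IsClosed.inter ?_ ?_)
  · have h1 : {pq : (∀ n, X n) × ↥(invLimSV X F) | ∀ i : Fin (k + 3), pq.1 i.1 = x i} =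
        ⋂ i : Fin (k + 3), {pq : (∀ n, X n) × ↥(invLimSV X F) | pq.1 i.1 = x i} := by
      ext pq; simp [Set.mem_iInter]
    rw [h1]
    exact isClosed_iInter fun i =>
      isClosed_eq ((continuous_apply i.1).comp continuous_fst) continuous_const
  · exact isClosed_eq (continuous_fst.dist (continuous_subtype_val.comp continuous_snd))
      ((continuous_infDist_pt _).comp continuous_fst)

lemma Qset_nonempty (hF : ∀ n, IsUSC (F n)) (hne : ∀ n, Nonempty (X n)) (k : ℕ)
    (x : ∀ i : Fin (k + 3), X i.1) : (Qset F k x).Nonempty := by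
  obtain ⟨z0, hz0⟩ := nonempty_invLimSV hF hne
  obtain ⟨y, hyI, hyd⟩ := ((isClosed_invLimSV hF).isCompact).exists_infDist_eq_dist
    ⟨z0, hz0⟩ (fun n => if h : n < k + 3 then x ⟨n, h⟩ else (hne n).some)
  refine ⟨⟨y, hyI⟩, fun n => if h : n < k + 3 then x ⟨n, h⟩ else (hne n).some,
    fun i => ?_, hyd.symm⟩
  show (if h : i.1 < k + 3 then x ⟨i.1, h⟩ else (hne i.1).some) = x i
  rw [dif_pos i.2]

lemma Hfwd_closed (hF : ∀ n, IsUSC (F n)) (g : ↥(invLimSV X F) → ↥(invLimSV X F))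
    (hg : Continuous g) (k : ℕ) (x : ∀ i : Fin (k + 3), X i.1) :
    IsClosed (Hfwd F g k x) := by
  haveI : CompactSpace ↥(invLimSV X F) :=
    isCompact_iff_compactSpace.mp (isClosed_invLimSV hF).isCompact
  exact ((isCompact_Qset hF k x).image
    ((continuous_preAt (k + 2)).comp (continuous_subtype_val.comp hg))).isClosed

lemma forward (hF : ∀ n, IsUSC (F n)) (hne : ∀ n, Nonempty (X n))
    (hL : ¬ HasFPP ↥(invLimSV X F)) :
    (∃ H : ∀ k : ℕ, (∀ i : Fin (k + 3), X i.1) → Set (∀ i : Fin (k + 2), X i.1),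
      (∀ k, ∀ x ∈ mahavier X F (k + 2),
        (H k x).Nonempty ∧ IsClosed (H k x) ∧ H k x ⊆ mahavier X F (k + 1)) ∧
      (∀ k, IsClosed {p : (∀ i : Fin (k + 3), X i.1) × (∀ i : Fin (k + 2), X i.1) |
        p.1 ∈ mahavier X F (k + 2) ∧ p.2 ∈ H k p.1}) ∧
      (∀ j : ℕ, ∀ x ∈ mahavier X F (j + 3), ∀ z ∈ H (j + 1) x,
        (fun i : Fin (j + 2) => z ⟨i.1, lt_of_lt_of_le i.2 (Nat.le_succ _)⟩) ∈
          H j (fun i : Fin (j + 3) => x ⟨i.1, lt_of_lt_of_le i.2 (Nat.le_succ _)⟩)) ∧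
      (∀ j : ℕ, ∀ x : ↥(invLimSV X F),
        Tendsto (fun t : ℕ =>
            diam {z : ∀ i : Fin (j + 1), X i.1 |
              z ∈ mahavier X F j ∧
              ∃ y ∈ H (t + j) (fun i : Fin (t + j + 3) => x.1 i.1),
                ∀ i : Fin (j + 1), y ⟨i.1, lt_of_lt_of_le i.2 (Nat.le_succ_of_le (Nat.succ_le_succ (Nat.le_add_left j t)))⟩ = z i})
          atTop (nhds (0 : ℝ))) ∧
      (∃ k : ℕ, ∀ x ∈ mahavier X F (k + 2),
        (fun i : Fin (k + 2) => x ⟨i.1, lt_of_lt_of_le i.2 (Nat.le_succ _)⟩) ∉ H k x)) := by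
  unfold HasFPP at hL
  push_neg at hL
  obtain ⟨g, hg, hfix⟩ := hL
  haveI hIcs : CompactSpace ↥(invLimSV X F) :=
    isCompact_iff_compactSpace.mp (isClosed_invLimSV hF).isCompact
  have hIne : (invLimSV X F).Nonempty := nonempty_invLimSV hF hne
  have hA : ∀ j : ℕ, ∀ x ∈ mahavier X F (j + 3), ∀ z ∈ Hfwd F g (j + 1) x,
      (fun i : Fin (j + 2) => z ⟨i.1, lt_of_lt_of_le i.2 (Nat.le_succ _)⟩) ∈
        Hfwd F g j (fun i : Fin (j + 3) => x ⟨i.1, lt_of_lt_of_le i.2 (by omega)⟩) := by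
    rintro j x hx z hz
    simp only [Hfwd, Qset, Set.mem_image, Set.mem_setOf_eq] at hz ⊢
    obtain ⟨q, hq, rfl⟩ := hz
    obtain ⟨p, hp, hd⟩ := hq
    exact ⟨q, ⟨p, fun i => hp ⟨i.1, by omega⟩, hd⟩, rfl⟩
  refine ⟨Hfwd F g, ?_, ?_, hA, ?_, ?_⟩
  · -- values
    intro k x hx
    refine ⟨(Qset_nonempty hF hne k x).image _, Hfwd_closed hF g hg k x, ?_⟩
    rintro z ⟨q, hq, rfl⟩
    exact pre_mem_mahavier (g q).2 (k + 1)
  · -- graph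
    intro k
    have hTc : IsCompact {pq : (∀ n, X n) × ↥(invLimSV X F) |
        pre pq.1 (k + 3) ∈ mahavier X F (k + 2) ∧
        dist pq.1 pq.2.1 = infDist pq.1 (invLimSV X F)} := by
      have h2 : {pq : (∀ n, X n) × ↥(invLimSV X F) |
          pre pq.1 (k + 3) ∈ mahavier X F (k + 2) ∧
          dist pq.1 pq.2.1 = infDist pq.1 (invLimSV X F)} =
        {pq : (∀ n, X n) × ↥(invLimSV X F) |
          pre pq.1 (k + 3) ∈ mahavier X F (k + 2)} ∩
        {pq : (∀ n, X n) × ↥(invLimSV X F) |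
          dist pq.1 pq.2.1 = infDist pq.1 (invLimSV X F)} := rfl
      rw [h2]
      refine IsClosed.isCompact (IsClosed.inter ?_ ?_)
      · exact (isClosed_mahavier hF (k + 2)).preimage
          ((continuous_preAt (k + 3)).comp continuous_fst)
      · exact isClosed_eq (continuous_fst.dist (continuous_subtype_val.comp continuous_snd))
          ((continuous_infDist_pt _).comp continuous_fst)
    have hmapc : Continuous (fun pq : (∀ n, X n) × ↥(invLimSV X F) =>
        ((pre pq.1 (k + 3), pre ((g pq.2)).1 (k + 2)) :
          (∀ i : Fin (k + 3), X i.1) × (∀ i : Fin (k + 2), X i.1))) :=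
      ((continuous_preAt _).comp continuous_fst).prodMk
        ((continuous_preAt _).comp (continuous_subtype_val.comp (hg.comp continuous_snd)))
    have himg2 : (fun pq : (∀ n, X n) × ↥(invLimSV X F) =>
          ((pre pq.1 (k + 3), pre ((g pq.2)).1 (k + 2)) :
            (∀ i : Fin (k + 3), X i.1) × (∀ i : Fin (k + 2), X i.1))) ''
        {pq : (∀ n, X n) × ↥(invLimSV X F) |
          pre pq.1 (k + 3) ∈ mahavier X F (k + 2) ∧
          dist pq.1 pq.2.1 = infDist pq.1 (invLimSV X F)} =
        {p : (∀ i : Fin (k + 3), X i.1) × (∀ i : Fin (k + 2), X i.1) |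
          p.1 ∈ mahavier X F (k + 2) ∧ p.2 ∈ Hfwd F g k p.1} := by
      ext pz
      simp only [Hfwd, Qset, Set.mem_image, Set.mem_setOf_eq]
      constructor
      · rintro ⟨⟨p, q⟩, ⟨hm, hd⟩, rfl⟩
        exact ⟨hm, q, ⟨p, fun i => rfl, hd⟩, rfl⟩
      · rintro ⟨hm, q, ⟨p, hp, hd⟩, hz⟩
        have hpx : pre p (k + 3) = pz.1 := funext fun i => hp i
        refine ⟨(p, q), ⟨?_, hd⟩, ?_⟩
        · rw [hpx]; exact hm
        · have h5 : (pre p (k + 3), pre ((g q)).1 (k + 2)) = (pz.1, pz.2) := by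
            rw [hpx, hz]
          exact h5
    rw [← himg2]
    exact (hTc.image hmapc).isClosed
  · -- (b)
    intro j x
    refine diam_tendsto_zero (K := fun t => SS (Hfwd F g) F j t x.1)
      (a := pre (g x).1 (j + 1)) ?_ ?_ ?_
    · intro t
      exact ss_compact hF (Hfwd_closed hF g hg (t + j) (pre x.1 (t + j + 3)))
    · intro t
      exact ss_antitone hA x.2 j t
    · intro w hw
      have hsel : ∀ t, ∃ q : ↥(invLimSV X F),
          (∃ p : ∀ n, X n, (∀ i : Fin (t + j + 3), p i.1 = x.1 i.1) ∧
            dist p q.1 = infDist p (invLimSV X F)) ∧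
          ∀ i : Fin (j + 1), (g q).1 i.1 = w i := by
        intro t
        obtain ⟨-, y, hy, hcs⟩ := hw t
        simp only [Hfwd, Qset, Set.mem_image, Set.mem_setOf_eq] at hy
        obtain ⟨q, hq, rfl⟩ := hy
        exact ⟨q, hq, fun i => hcs i⟩
      choose qf hqf hqc using hsel
      have hdq : ∀ t, dist (qf t).1 x.1 ≤ (1 / 2) ^ (t + j + 3) * 4 := by
        intro t
        obtain ⟨p, hp, hd⟩ := hqf t
        have b1 : dist p x.1 ≤ (1 / 2) ^ (t + j + 3) * 2 :=
          dist_le_of_prefix_eq fun i hi => hp ⟨i, hi⟩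
        have b2 : dist p (qf t).1 ≤ (1 / 2) ^ (t + j + 3) * 2 := by
          rw [hd]
          exact le_trans (infDist_le_dist_of_mem x.2) b1
        calc dist (qf t).1 x.1 ≤ dist (qf t).1 p + dist p x.1 := dist_triangle _ _ _
          _ ≤ (1 / 2) ^ (t + j + 3) * 2 + (1 / 2) ^ (t + j + 3) * 2 :=
              add_le_add (by rw [dist_comm]; exact b2) b1
          _ = (1 / 2) ^ (t + j + 3) * 4 := by ring
      have hql : Tendsto (fun t => (qf t).1) atTop (nhds x.1) := by
        refine tendsto_iff_dist_tendsto_zero.2 ?_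
        refine squeeze_zero (fun t => dist_nonneg) hdq ?_
        have h4 : Tendsto (fun t : ℕ => ((1 : ℝ) / 2) ^ t) atTop (nhds 0) := by
          apply tendsto_pow_atTop_nhds_zero_of_lt_one <;> norm_num
        have h5 := h4.mul_const (((1 : ℝ) / 2) ^ (j + 3) * 4)
        rw [zero_mul] at h5
        refine h5.congr fun t => ?_
        rw [show t + j + 3 = t + (j + 3) from by omega, pow_add]
        ring
      have hql2 : Tendsto qf atTop (nhds x) := by
        rw [show x = (⟨x.1, x.2⟩ : ↥(invLimSV X F)) from rfl, tendsto_subtype_rng]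
        exact hql
      have hgl : Tendsto (fun t => g (qf t)) atTop (nhds (g x)) := (hg.tendsto x).comp hql2
      funext i
      have hco : Tendsto (fun t => (g (qf t)).1 i.1) atTop (nhds ((g x).1 i.1)) :=
        (((continuous_apply i.1).comp continuous_subtype_val).tendsto _).comp hgl
      have hco' : Tendsto (fun _ : ℕ => w i) atTop (nhds ((g x).1 i.1)) :=
        hco.congr fun t => hqc t i
      exact tendsto_nhds_unique tendsto_const_nhds hco'
  · -- (c)
    have hcont2 : Continuous (fun q : ↥(invLimSV X F) => dist q.1 (g q).1) :=
      continuous_subtype_val.dist (continuous_subtype_val.comp hg)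
    haveI : Nonempty ↥(invLimSV X F) := hIne.to_subtype
    obtain ⟨q0, -, hq0'⟩ := isCompact_univ.exists_isMinOn univ_nonempty
      hcont2.continuousOn
    have hq0 : ∀ q : ↥(invLimSV X F), dist q0.1 (g q0).1 ≤ dist q.1 (g q).1 :=
      fun q => hq0' (mem_univ q)
    have hεpos : 0 < dist q0.1 (g q0).1 :=
      dist_pos.2 fun h => hfix q0 (Subtype.ext h.symm)
    obtain ⟨m, hm⟩ : ∃ m : ℕ, ((1 : ℝ) / 2) ^ m < dist q0.1 (g q0).1 / 4 := by
      apply exists_pow_lt_of_lt_one (by positivity) (by norm_num)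
    refine ⟨m, ?_⟩
    rintro x hx hmem
    simp only [Hfwd, Qset, Set.mem_image, Set.mem_setOf_eq] at hmem
    obtain ⟨q, hq, heq⟩ := hmem
    obtain ⟨p, hp, hd⟩ := hq
    have hpg : ∀ i, i < m + 2 → p i = (g q).1 i := by
      intro i hi
      have e1 : p i = x ⟨i, by omega⟩ := hp ⟨i, by omega⟩
      have e2 : (g q).1 i = x ⟨i, by omega⟩ := congrFun heq ⟨i, hi⟩
      rw [e1, e2]
    have b1 : dist p (g q).1 ≤ (1 / 2) ^ (m + 2) * 2 := dist_le_of_prefix_eq hpg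
    have b2 : dist p q.1 ≤ (1 / 2) ^ (m + 2) * 2 := by
      rw [hd]
      exact le_trans (infDist_le_dist_of_mem (g q).2) b1
    have hb3 : dist q.1 (g q).1 < dist q0.1 (g q0).1 := by
      have h6 : ((1 : ℝ) / 2) ^ (m + 2) ≤ (1 / 2) ^ m := by
        apply pow_le_pow_of_le_one (by norm_num) (by norm_num) (by omega)
      have h7 := dist_triangle q.1 p (g q).1
      have h8 : dist q.1 p = dist p q.1 := dist_comm _ _
      nlinarith
    have h9 : dist q0.1 (g q0).1 ≤ dist q.1 (g q).1 := hq0 q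
    linarith

lemma rhs_of_empty (hF : ∀ n, IsUSC (F n)) (hne : ¬ ∀ n, Nonempty (X n)) :
    (∃ H : ∀ k : ℕ, (∀ i : Fin (k + 3), X i.1) → Set (∀ i : Fin (k + 2), X i.1),
      (∀ k, ∀ x ∈ mahavier X F (k + 2),
        (H k x).Nonempty ∧ IsClosed (H k x) ∧ H k x ⊆ mahavier X F (k + 1)) ∧
      (∀ k, IsClosed {p : (∀ i : Fin (k + 3), X i.1) × (∀ i : Fin (k + 2), X i.1) |
        p.1 ∈ mahavier X F (k + 2) ∧ p.2 ∈ H k p.1}) ∧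
      (∀ j : ℕ, ∀ x ∈ mahavier X F (j + 3), ∀ z ∈ H (j + 1) x,
        (fun i : Fin (j + 2) => z ⟨i.1, lt_of_lt_of_le i.2 (Nat.le_succ _)⟩) ∈
          H j (fun i : Fin (j + 3) => x ⟨i.1, lt_of_lt_of_le i.2 (Nat.le_succ _)⟩)) ∧
      (∀ j : ℕ, ∀ x : ↥(invLimSV X F),
        Tendsto (fun t : ℕ =>
            diam {z : ∀ i : Fin (j + 1), X i.1 |
              z ∈ mahavier X F j ∧
              ∃ y ∈ H (t + j) (fun i : Fin (t + j + 3) => x.1 i.1),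
                ∀ i : Fin (j + 1), y ⟨i.1, lt_of_lt_of_le i.2 (Nat.le_succ_of_le (Nat.succ_le_succ (Nat.le_add_left j t)))⟩ = z i})
          atTop (nhds (0 : ℝ))) ∧
      (∃ k : ℕ, ∀ x ∈ mahavier X F (k + 2),
        (fun i : Fin (k + 2) => x ⟨i.1, lt_of_lt_of_le i.2 (Nat.le_succ _)⟩) ∉ H k x)) := by
  push_neg at hne
  obtain ⟨n0, hn0⟩ := hne
  refine ⟨fun k x => {trc (by omega) x}, ?_, ?_, ?_, ?_, ?_⟩
  · intro k x hx
    refine ⟨⟨_, rfl⟩, isClosed_singleton, ?_⟩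
    rintro z hz
    rw [mem_singleton_iff] at hz
    subst hz
    exact mem_mahavier_trc (by omega) hx
  · intro k
    have h2 : {p : (∀ i : Fin (k + 3), X i.1) × (∀ i : Fin (k + 2), X i.1) |
        p.1 ∈ mahavier X F (k + 2) ∧ p.2 ∈ ({trc (by omega) p.1} : Set _)} =
        {p : (∀ i : Fin (k + 3), X i.1) × (∀ i : Fin (k + 2), X i.1) |
          p.1 ∈ mahavier X F (k + 2)} ∩
        {p : (∀ i : Fin (k + 3), X i.1) × (∀ i : Fin (k + 2), X i.1) |
          p.2 = trc (by omega) p.1} := by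
      ext p; simp [mem_singleton_iff]
    rw [h2]
    exact ((isClosed_mahavier hF (k + 2)).preimage continuous_fst).inter
      (isClosed_eq continuous_snd ((continuous_trc _).comp continuous_fst))
  · intro j x hx z hz
    rw [mem_singleton_iff] at hz
    subst hz
    exact rfl
  · intro j x
    exact (hn0.false (x.1 n0)).elim
  · exact ⟨n0, fun x hx h => (hn0.false (x ⟨n0, by omega⟩)).elim⟩

end Stmt16Proof

theorem stmt16
    {X : ℕ → Type*} [∀ n, MetricSpace (X n)] [∀ n, CompactSpace (X n)]
    (F : ∀ n, X (n + 1) → Set (X n)) (hF : ∀ n, IsUSC (F n)) :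
    (¬ HasFPP ↥(invLimSV X F)) ↔
    (∃ H : ∀ k : ℕ, (∀ i : Fin (k + 3), X i.1) → Set (∀ i : Fin (k + 2), X i.1),
      -- each `H k` is an upper semicontinuous set-valued function from the
      -- Mahavier product `⋆_{i=1}^{k+2} Γ(F_i⁻¹)` to `⋆_{i=1}^{k+1} Γ(F_i⁻¹)`
      (∀ k, ∀ x ∈ mahavier X F (k + 2),
        (H k x).Nonempty ∧ IsClosed (H k x) ∧ H k x ⊆ mahavier X F (k + 1)) ∧
      (∀ k, IsClosed {p : (∀ i : Fin (k + 3), X i.1) × (∀ i : Fin (k + 2), X i.1) |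
        p.1 ∈ mahavier X F (k + 2) ∧ p.2 ∈ H k p.1}) ∧
      -- (a)
      (∀ j : ℕ, ∀ x ∈ mahavier X F (j + 3), ∀ z ∈ H (j + 1) x,
        (fun i : Fin (j + 2) => z ⟨i.1, lt_of_lt_of_le i.2 (by omega)⟩) ∈
          H j (fun i : Fin (j + 3) => x ⟨i.1, lt_of_lt_of_le i.2 (by omega)⟩)) ∧
      -- (b)
      (∀ j : ℕ, ∀ x : ↥(invLimSV X F),
        Tendsto (fun t : ℕ =>
            diam {z : ∀ i : Fin (j + 1), X i.1 |
              z ∈ mahavier X F j ∧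
              ∃ y ∈ H (t + j) (fun i : Fin (t + j + 3) => x.1 i.1),
                ∀ i : Fin (j + 1), y ⟨i.1, lt_of_lt_of_le i.2 (by omega)⟩ = z i})
          atTop (nhds (0 : ℝ))) ∧
      -- (c)
      (∃ k : ℕ, ∀ x ∈ mahavier X F (k + 2),
        (fun i : Fin (k + 2) => x ⟨i.1, lt_of_lt_of_le i.2 (by omega)⟩) ∉ H k x)) := by
  constructor
  · intro h
    by_cases hne : ∀ n, Nonempty (X n)
    · exact forward hF hne h
    · exact rhs_of_empty hF hne
  · intro h
    exact backward hF h
end
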